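/- (Maximum causal entropy equals maximum causal log-likelihood, Theorem 2 of the paper.) Let P* be a human model (the true behavior), Q a machine policy, 𝓖 = ∅ (no inequality features), and set c_f := E_{P*Q}[f(H^T,M^T)] (statistics from the true distribution, without sampling error). If λ̂ ∈ ℝ^𝓕 maximizes the expected causal log-likelihood λ ↦ E_{P*Q}[log P_λ(H^T‖M^T)] over λ ∈ ℝ^𝓕, then the causal Gibbs model P_{λ̂} satisfies the feature constraints E_{P_{λ̂}Q}[f(H^T,M^T)] = c_f and maximizes the causally conditioned entropy H_{PQ}(H^T‖M^T) over all human models P with E_{PQ}[f(H^T,M^T)] = c_f. -/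

import Mathlib

/-! Common framework: finite-horizon human–machine interaction processes.
Times are 0-indexed: step `t : Fin T` corresponds to the paper's step `t+1`.
A human model gives conditional PMFs `P(h_t | h^{t-1}, m^t)`: the value
`p t h m a` may depend only on `h s` for `s < t`, on `m s` for `s ≤ t`, and on `a`.
A machine policy gives conditional PMFs `Q(m_t | h^{t-1}, m^{t-1})`: the value
`q t h m b` may depend only on `h s`, `m s` for `s < t`, and on `b`. -/

structure HumanModel (T : ℕ) (H M : Type*) [Fintype H] where
  p : Fin T → (Fin T → H) → (Fin T → M) → H → ℝ
  causal : ∀ (t : Fin T) (h h' : Fin T → H) (m m' : Fin T → M),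
      (∀ s, s < t → h s = h' s) → (∀ s, s ≤ t → m s = m' s) → p t h m = p t h' m'
  nonneg : ∀ t h m a, 0 ≤ p t h m a
  sum_one : ∀ t h m, ∑ a, p t h m a = 1

structure MachinePolicy (T : ℕ) (H M : Type*) [Fintype M] where
  q : Fin T → (Fin T → H) → (Fin T → M) → M → ℝ
  causal : ∀ (t : Fin T) (h h' : Fin T → H) (m m' : Fin T → M),
      (∀ s, s < t → h s = h' s) → (∀ s, s < t → m s = m' s) → q t h m = q t h' m'
  nonneg : ∀ t h m b, 0 ≤ q t h m b
  sum_one : ∀ t h m, ∑ b, q t h m b = 1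

variable {T : ℕ} {H M : Type*} [Fintype H] [Fintype M]

/-- Causally conditioned distribution of the human: `P(h^T ‖ m^T)`. -/
noncomputable def HumanModel.cc (P : HumanModel T H M) (h : Fin T → H) (m : Fin T → M) : ℝ :=
  ∏ t, P.p t h m (h t)

/-- Causally conditioned distribution of the machine: `Q(m^T ‖ h^T)`. -/
noncomputable def MachinePolicy.cc (Q : MachinePolicy T H M) (h : Fin T → H) (m : Fin T → M) : ℝ :=
  ∏ t, Q.q t h m (m t)

/-- Joint PMF `PQ(h^T, m^T)`. -/
noncomputable def jointPMF (P : HumanModel T H M) (Q : MachinePolicy T H M)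
    (h : Fin T → H) (m : Fin T → M) : ℝ :=
  P.cc h m * Q.cc h m

/-- Expectation `E_{PQ}[φ(H^T, M^T)]`. -/
noncomputable def expVal (P : HumanModel T H M) (Q : MachinePolicy T H M)
    (φ : (Fin T → H) → (Fin T → M) → ℝ) : ℝ :=
  ∑ h : Fin T → H, ∑ m : Fin T → M, jointPMF P Q h m * φ h m

/-- Causally conditioned entropy of the human, `H_{PQ}(H^T ‖ M^T)`. -/
noncomputable def humanEntropy (P : HumanModel T H M) (Q : MachinePolicy T H M) : ℝ :=
  ∑ h : Fin T → H, ∑ m : Fin T → M, jointPMF P Q h m * (- Real.log (P.cc h m))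

/-- Causally conditioned entropy of the machine, `H_{PQ}(M^T ‖ H^T)`. -/
noncomputable def machineEntropy (P : HumanModel T H M) (Q : MachinePolicy T H M) : ℝ :=
  ∑ h : Fin T → H, ∑ m : Fin T → M, jointPMF P Q h m * (- Real.log (Q.cc h m))

lemma idx_lt (T k : ℕ) [NeZero T] : T - 1 - k < T := by
  have := Nat.pos_of_ne_zero (NeZero.ne T); omega

variable [NeZero T]

/-- Backward recursion for `Z_λ(h_t | h^{t-1}, m^t)`, parameterized by fuel `k = (T-1) - t`.
`Zaux Q φ k h m` is `Z_λ(h_t | h^{t-1}, m^t)` at (0-indexed) step `t = T - 1 - k`, where the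
current human action `h_t` is read off as `h t`. The terminal exponent `φ h m` plays the
role of `λ_f·f(h^T,m^T) + λ_g·g(h^T,m^T)`. -/
noncomputable def Zaux (Q : MachinePolicy T H M)
    (φ : (Fin T → H) → (Fin T → M) → ℝ) :
    ℕ → (Fin T → H) → (Fin T → M) → ℝ
  | 0, h, m => Real.exp (φ h m)
  | k + 1, h, m =>
      Real.exp (∑ b : M, Q.q ⟨T - 1 - k, idx_lt T k⟩ h m b *
        Real.log (∑ a : H, Zaux Q φ k
          (Function.update h ⟨T - 1 - k, idx_lt T k⟩ a)
          (Function.update m ⟨T - 1 - k, idx_lt T k⟩ b)))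

/-- `Z_λ(h_t | h^{t-1}, m^t)` at step `t`, with `h_t = h t`. -/
noncomputable def Zcond (Q : MachinePolicy T H M)
    (φ : (Fin T → H) → (Fin T → M) → ℝ) (t : Fin T)
    (h : Fin T → H) (m : Fin T → M) : ℝ :=
  Zaux Q φ (T - 1 - t.val) h m

/-- `Z_λ(h^{t-1}, m^t) = Σ_{h_t} Z_λ(h_t | h^{t-1}, m^t)`. -/
noncomputable def Zmarg (Q : MachinePolicy T H M)
    (φ : (Fin T → H) → (Fin T → M) → ℝ) (t : Fin T)
    (h : Fin T → H) (m : Fin T → M) : ℝ :=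
  ∑ a : H, Zcond Q φ t (Function.update h t a) m

variable [Nonempty H] [Nonempty M]

/-- `Σ_{m_1} Q(m_1) · log Z_λ(m_1)` (the log-partition part of the dual objective).
By causality of `Q` and of the recursion, the choice of base sequences is immaterial. -/
noncomputable def dualPartition (Q : MachinePolicy T H M)
    (φ : (Fin T → H) → (Fin T → M) → ℝ) : ℝ :=
  ∑ b : M, Q.q 0 (Classical.arbitrary _) (Classical.arbitrary _) b *
    Real.log (Zmarg Q φ 0 (Classical.arbitrary _)
      (Function.update (Classical.arbitrary (Fin T → M)) 0 b))

/-- `P` is the causal Gibbs human model `P_λ` associated with machine policy `Q` and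
terminal exponent `φ`: `P_λ(h_t | h^{t-1}, m^t) = Z_λ(h_t | h^{t-1}, m^t) / Z_λ(h^{t-1}, m^t)`. -/
def IsGibbs (Q : MachinePolicy T H M)
    (φ : (Fin T → H) → (Fin T → M) → ℝ) (P : HumanModel T H M) : Prop :=
  ∀ (t : Fin T) (h : Fin T → H) (m : Fin T → M) (a : H),
    P.p t h m a = Zcond Q φ t (Function.update h t a) m / Zmarg Q φ t h m

/-- The causally conditioned distribution of the causal Gibbs model:
`P_λ(h^T‖m^T) = ∏_t Z_λ(h_t | h^{t-1}, m^t) / Z_λ(h^{t-1}, m^t)`. -/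
noncomputable def gibbsCC (Q : MachinePolicy T H M)
    (φ : (Fin T → H) → (Fin T → M) → ℝ) (h : Fin T → H) (m : Fin T → M) : ℝ :=
  ∏ t, Zcond Q φ t h m / Zmarg Q φ t h m


section AuxLemmas

/-- Counting lemma: summing over all functions and all values of one coordinate update
overcounts by `card β`. -/
lemma sum_sum_update {α β : Type*} [Fintype α] [Fintype β] [DecidableEq α]
    (a : α) (F : (α → β) → ℝ) :
    ∑ b : β, ∑ g : α → β, F (Function.update g a b)
      = (Fintype.card β : ℝ) * ∑ g : α → β, F g := by
  have hbij : Function.Bijective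
      (fun p : (α → β) × β => (Function.update p.1 a p.2, p.1 a)) := by
    apply Function.Involutive.bijective
    intro p
    simp [Function.update_idem, Function.update_self, Function.update_eq_self]
  have h1 : ∑ p : ((α → β) × β), F (Function.update p.1 a p.2)
      = ∑ p : ((α → β) × β), F p.1 :=
    Fintype.sum_bijective _ hbij _ _ (fun p => rfl)
  have h2 : ∑ b : β, ∑ g : α → β, F (Function.update g a b)
      = ∑ p : ((α → β) × β), F (Function.update p.1 a p.2) := by
    rw [Fintype.sum_prod_type]
    exact Finset.sum_comm
  rw [h2, h1, Fintype.sum_prod_type]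
  simp only [Finset.sum_const, Finset.card_univ, nsmul_eq_mul]
  rw [← Finset.mul_sum]

lemma Zaux_pos (Q : MachinePolicy T H M) (φ : (Fin T → H) → (Fin T → M) → ℝ) :
    ∀ (k : ℕ) (h : Fin T → H) (m : Fin T → M), 0 < Zaux Q φ k h m := by
  intro k
  induction k with
  | zero => intro h m; exact Real.exp_pos _
  | succ k ih => intro h m; exact Real.exp_pos _

lemma Zcond_pos (Q : MachinePolicy T H M) (φ : (Fin T → H) → (Fin T → M) → ℝ)
    (t : Fin T) (h : Fin T → H) (m : Fin T → M) : 0 < Zcond Q φ t h m :=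
  Zaux_pos Q φ _ h m

lemma Zmarg_pos (Q : MachinePolicy T H M) (φ : (Fin T → H) → (Fin T → M) → ℝ)
    (t : Fin T) (h : Fin T → H) (m : Fin T → M) : 0 < Zmarg Q φ t h m :=
  Finset.sum_pos (fun a _ => Zcond_pos Q φ t _ m) Finset.univ_nonempty

lemma gibbsCC_pos (Q : MachinePolicy T H M) (φ : (Fin T → H) → (Fin T → M) → ℝ)
    (h : Fin T → H) (m : Fin T → M) : 0 < gibbsCC Q φ h m :=
  Finset.prod_pos (fun t _ => div_pos (Zcond_pos Q φ t h m) (Zmarg_pos Q φ t h m))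

/-- `Zaux Q φ k` depends only on coordinates `≤ T-1-k`. -/
lemma Zaux_dep (Q : MachinePolicy T H M) (φ : (Fin T → H) → (Fin T → M) → ℝ) :
    ∀ (k : ℕ) (h h' : Fin T → H) (m m' : Fin T → M),
      (∀ s : Fin T, s.val ≤ T - 1 - k → h s = h' s) →
      (∀ s : Fin T, s.val ≤ T - 1 - k → m s = m' s) →
      Zaux Q φ k h m = Zaux Q φ k h' m' := by
  intro k
  induction k with
  | zero =>
    intro h h' m m' hh hm
    have hh' : h = h' := funext fun s => hh s (by omega)
    have hm' : m = m' := funext fun s => hm s (by omega)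
    rw [hh', hm']
  | succ k ih =>
    intro h h' m m' hh hm
    show Real.exp _ = Real.exp _
    congr 1
    refine Finset.sum_congr rfl (fun b _ => ?_)
    have hq : Q.q ⟨T - 1 - k, idx_lt T k⟩ h m = Q.q ⟨T - 1 - k, idx_lt T k⟩ h' m' := by
      refine Q.causal _ _ _ _ _ (fun s hs => hh s ?_) (fun s hs => hm s ?_)
      · have := hs; simp [Fin.lt_def] at this; omega
      · have := hs; simp [Fin.lt_def] at this; omega
    rw [hq]
    congr 1
    congr 1
    refine Finset.sum_congr rfl (fun a _ => ?_)
    refine ih _ _ _ _ (fun s hs => ?_) (fun s hs => ?_)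
    · rcases eq_or_ne s (⟨T - 1 - k, idx_lt T k⟩ : Fin T) with hst | hst
      · subst hst; simp
      · have hsv : s.val ≠ T - 1 - k := fun hc => hst (Fin.ext hc)
        rw [Function.update_of_ne hst, Function.update_of_ne hst]
        exact hh s (by omega)
    · rcases eq_or_ne s (⟨T - 1 - k, idx_lt T k⟩ : Fin T) with hst | hst
      · subst hst; simp
      · have hsv : s.val ≠ T - 1 - k := fun hc => hst (Fin.ext hc)
        rw [Function.update_of_ne hst, Function.update_of_ne hst]
        exact hm s (by omega)

lemma Zcond_dep (Q : MachinePolicy T H M) (φ : (Fin T → H) → (Fin T → M) → ℝ)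
    (t : Fin T) (h h' : Fin T → H) (m m' : Fin T → M)
    (hh : ∀ s : Fin T, s.val ≤ t.val → h s = h' s)
    (hm : ∀ s : Fin T, s.val ≤ t.val → m s = m' s) :
    Zcond Q φ t h m = Zcond Q φ t h' m' := by
  have ht : T - 1 - (T - 1 - t.val) = t.val := by have := t.isLt; omega
  exact Zaux_dep Q φ _ h h' m m' (fun s hs => hh s (by omega)) (fun s hs => hm s (by omega))

lemma Zmarg_dep (Q : MachinePolicy T H M) (φ : (Fin T → H) → (Fin T → M) → ℝ)
    (t : Fin T) (h h' : Fin T → H) (m m' : Fin T → M)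
    (hh : ∀ s : Fin T, s.val < t.val → h s = h' s)
    (hm : ∀ s : Fin T, s.val ≤ t.val → m s = m' s) :
    Zmarg Q φ t h m = Zmarg Q φ t h' m' := by
  refine Finset.sum_congr rfl (fun a _ => ?_)
  refine Zcond_dep Q φ t _ _ _ _ (fun s hs => ?_) hm
  rcases eq_or_ne s t with hst | hst
  · subst hst; simp
  · have hsv : s.val ≠ t.val := fun hc => hst (Fin.ext hc)
    rw [Function.update_of_ne hst, Function.update_of_ne hst]
    exact hh s (by omega)


/-- Backward iterated conditional expectation operator: `Ebar P Q G k h m` integrates `G`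
over the last `k` coordinates given the past `(h, m)` truncated before step `T - k`. -/
noncomputable def Ebar (P : HumanModel T H M) (Q : MachinePolicy T H M)
    (G : (Fin T → H) → (Fin T → M) → ℝ) : ℕ → (Fin T → H) → (Fin T → M) → ℝ
  | 0, h, m => G h m
  | k + 1, h, m =>
      ∑ b : M, ∑ a : H,
        Q.q ⟨T - 1 - k, idx_lt T k⟩ h m b *
          (P.p ⟨T - 1 - k, idx_lt T k⟩ h (Function.update m ⟨T - 1 - k, idx_lt T k⟩ b) a *
            Ebar P Q G k (Function.update h ⟨T - 1 - k, idx_lt T k⟩ a)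
              (Function.update m ⟨T - 1 - k, idx_lt T k⟩ b))

/-- `Ebar P Q G k` depends only on coordinates `< T - k`. -/
lemma Ebar_dep (P : HumanModel T H M) (Q : MachinePolicy T H M)
    (G : (Fin T → H) → (Fin T → M) → ℝ) :
    ∀ (k : ℕ) (h h' : Fin T → H) (m m' : Fin T → M),
      (∀ s : Fin T, s.val < T - k → h s = h' s) →
      (∀ s : Fin T, s.val < T - k → m s = m' s) →
      Ebar P Q G k h m = Ebar P Q G k h' m' := by
  intro k
  induction k with
  | zero =>
    intro h h' m m' hh hm
    have hh' : h = h' := funext fun s => hh s (by have := s.isLt; omega)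
    have hm' : m = m' := funext fun s => hm s (by have := s.isLt; omega)
    rw [hh', hm']
  | succ k ih =>
    intro h h' m m' hh hm
    show (∑ b : M, ∑ a : H, _) = _
    refine Finset.sum_congr rfl (fun b _ => Finset.sum_congr rfl (fun a _ => ?_))
    have hq : Q.q ⟨T - 1 - k, idx_lt T k⟩ h m = Q.q ⟨T - 1 - k, idx_lt T k⟩ h' m' := by
      refine Q.causal _ _ _ _ _ (fun s hs => hh s ?_) (fun s hs => hm s ?_) <;>
        (simp [Fin.lt_def] at hs; omega)
    have hp : P.p ⟨T - 1 - k, idx_lt T k⟩ h (Function.update m ⟨T - 1 - k, idx_lt T k⟩ b)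
        = P.p ⟨T - 1 - k, idx_lt T k⟩ h' (Function.update m' ⟨T - 1 - k, idx_lt T k⟩ b) := by
      refine P.causal _ _ _ _ _ (fun s hs => hh s ?_) (fun s hs => ?_)
      · simp [Fin.lt_def] at hs; omega
      · rcases eq_or_ne s (⟨T - 1 - k, idx_lt T k⟩ : Fin T) with hst | hst
        · subst hst; simp
        · have hsv : s.val ≠ T - 1 - k := fun hc => hst (Fin.ext hc)
          rw [Function.update_of_ne hst, Function.update_of_ne hst]
          simp [Fin.le_def] at hs
          exact hm s (by omega)
    have hE : Ebar P Q G k (Function.update h ⟨T - 1 - k, idx_lt T k⟩ a)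
          (Function.update m ⟨T - 1 - k, idx_lt T k⟩ b)
        = Ebar P Q G k (Function.update h' ⟨T - 1 - k, idx_lt T k⟩ a)
          (Function.update m' ⟨T - 1 - k, idx_lt T k⟩ b) := by
      refine ih _ _ _ _ (fun s hs => ?_) (fun s hs => ?_) <;>
      · rcases eq_or_ne s (⟨T - 1 - k, idx_lt T k⟩ : Fin T) with hst | hst
        · subst hst; simp
        · have hsv : s.val ≠ T - 1 - k := fun hc => hst (Fin.ext hc)
          rw [Function.update_of_ne hst, Function.update_of_ne hst]
          first
          | exact hh s (by omega)
          | exact hm s (by omega)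
    rw [hq, hp, hE]

/-- If `G` depends only on coordinates `< T - k`, then `Ebar` acts as the identity. -/
lemma Ebar_indep (P : HumanModel T H M) (Q : MachinePolicy T H M) :
    ∀ (k : ℕ) (G : (Fin T → H) → (Fin T → M) → ℝ),
      (∀ (h h' : Fin T → H) (m m' : Fin T → M),
        (∀ s : Fin T, s.val < T - k → h s = h' s) →
        (∀ s : Fin T, s.val < T - k → m s = m' s) → G h m = G h' m') →
      ∀ h m, Ebar P Q G k h m = G h m := by
  intro k
  induction k with
  | zero => intro G hG h m; rfl
  | succ k ih =>
    intro G hG h m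
    have hGk : ∀ (h h' : Fin T → H) (m m' : Fin T → M),
        (∀ s : Fin T, s.val < T - k → h s = h' s) →
        (∀ s : Fin T, s.val < T - k → m s = m' s) → G h m = G h' m' := by
      intro h h' m m' hh hm
      exact hG h h' m m' (fun s hs => hh s (by omega)) (fun s hs => hm s (by omega))
    show (∑ b : M, ∑ a : H, _) = _
    have key : ∀ b : M, ∀ a : H,
        Ebar P Q G k (Function.update h ⟨T - 1 - k, idx_lt T k⟩ a)
          (Function.update m ⟨T - 1 - k, idx_lt T k⟩ b) = G h m := by
      intro b a
      rw [ih G hGk]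
      refine hG _ _ _ _ (fun s hs => ?_) (fun s hs => ?_) <;>
      · have hsv : s.val ≠ T - 1 - k := by omega
        exact Function.update_of_ne (fun hc => hsv (by rw [hc])) _ _
    calc (∑ b : M, ∑ a : H,
        Q.q ⟨T - 1 - k, idx_lt T k⟩ h m b *
          (P.p ⟨T - 1 - k, idx_lt T k⟩ h (Function.update m ⟨T - 1 - k, idx_lt T k⟩ b) a *
            Ebar P Q G k (Function.update h ⟨T - 1 - k, idx_lt T k⟩ a)
              (Function.update m ⟨T - 1 - k, idx_lt T k⟩ b)))
        = ∑ b : M, ∑ a : H,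
            Q.q ⟨T - 1 - k, idx_lt T k⟩ h m b *
              (P.p ⟨T - 1 - k, idx_lt T k⟩ h (Function.update m ⟨T - 1 - k, idx_lt T k⟩ b) a *
                G h m) := by
          refine Finset.sum_congr rfl (fun b _ => Finset.sum_congr rfl (fun a _ => ?_))
          rw [key b a]
      _ = ∑ b : M, Q.q ⟨T - 1 - k, idx_lt T k⟩ h m b * G h m := by
          refine Finset.sum_congr rfl (fun b _ => ?_)
          rw [← Finset.mul_sum, ← Finset.sum_mul, P.sum_one, one_mul]
      _ = G h m := by rw [← Finset.sum_mul, Q.sum_one, one_mul]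

/-- Pointwise equality of `Ebar` at level `k` propagates to any level `n ≥ k`. -/
lemma Ebar_eq_of_eq (P : HumanModel T H M) (Q : MachinePolicy T H M)
    (G G' : (Fin T → H) → (Fin T → M) → ℝ) (k : ℕ)
    (hk : ∀ h m, Ebar P Q G k h m = Ebar P Q G' k h m) :
    ∀ n, k ≤ n → ∀ h m, Ebar P Q G n h m = Ebar P Q G' n h m := by
  intro n
  induction n with
  | zero => intro hn; have : k = 0 := Nat.le_zero.mp hn; subst this; exact hk
  | succ n ih =>
    intro hn h m
    rcases Nat.lt_or_ge k (n+1) with hlt | hge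
    · have hkn : k ≤ n := by omega
      show (∑ b : M, ∑ a : H, _) = (∑ b : M, ∑ a : H, _)
      refine Finset.sum_congr rfl (fun b _ => Finset.sum_congr rfl (fun a _ => ?_))
      rw [ih hkn]
    · have : k = n + 1 := by omega
      subst this; exact hk h m


lemma sum_update_pair (t0 : Fin T) (F : (Fin T → H) → (Fin T → M) → ℝ) :
    ∑ h : Fin T → H, ∑ m : Fin T → M, ∑ b : M, ∑ a : H,
        F (Function.update h t0 a) (Function.update m t0 b)
      = ((Fintype.card H : ℝ) * (Fintype.card M)) *
          ∑ h : Fin T → H, ∑ m : Fin T → M, F h m := by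
  have hbij : Function.Bijective (fun p : ((Fin T → H) × (Fin T → M)) × (M × H) =>
      ((((Function.update p.1.1 t0 p.2.2 : Fin T → H),
          (Function.update p.1.2 t0 p.2.1 : Fin T → M))),
        ((p.1.2 t0, p.1.1 t0) : M × H))) := by
    apply Function.Involutive.bijective
    intro p
    simp [Function.update_idem, Function.update_self, Function.update_eq_self]
  have h1 : ∑ p : ((Fin T → H) × (Fin T → M)) × (M × H),
      F (Function.update p.1.1 t0 p.2.2) (Function.update p.1.2 t0 p.2.1)
      = ∑ p : ((Fin T → H) × (Fin T → M)) × (M × H), F p.1.1 p.1.2 :=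
    Fintype.sum_bijective _ hbij _ _ (fun p => rfl)
  have h2 : ∑ h : Fin T → H, ∑ m : Fin T → M, ∑ b : M, ∑ a : H,
      F (Function.update h t0 a) (Function.update m t0 b)
      = ∑ p : ((Fin T → H) × (Fin T → M)) × (M × H),
          F (Function.update p.1.1 t0 p.2.2) (Function.update p.1.2 t0 p.2.1) := by
    simp [Fintype.sum_prod_type]
  rw [h2, h1]
  simp only [Fintype.sum_prod_type, Finset.sum_const, Finset.card_univ, nsmul_eq_mul]
  rw [Finset.mul_sum]
  refine Finset.sum_congr rfl (fun h _ => ?_)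
  rw [Finset.mul_sum]
  refine Finset.sum_congr rfl (fun m _ => ?_)
  rw [Fintype.card_prod]
  push_cast
  ring

lemma master_aux (P : HumanModel T H M) (Q : MachinePolicy T H M)
    (G : (Fin T → H) → (Fin T → M) → ℝ) :
    ∀ k, k ≤ T →
      (∑ h : Fin T → H, ∑ m : Fin T → M, jointPMF P Q h m * G h m)
        = (((Fintype.card H : ℝ) * Fintype.card M)⁻¹) ^ k *
          ∑ h : Fin T → H, ∑ m : Fin T → M,
            (∏ t ∈ Finset.univ.filter (fun t : Fin T => t.val < T - k),
              P.p t h m (h t) * Q.q t h m (m t)) * Ebar P Q G k h m := by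
  intro k
  induction k with
  | zero =>
    intro _
    have hfil : Finset.univ.filter (fun t : Fin T => t.val < T - 0) = Finset.univ := by
      ext t; simp [t.isLt]
    rw [hfil]
    simp only [pow_zero, one_mul]
    refine Finset.sum_congr rfl (fun h _ => Finset.sum_congr rfl (fun m _ => ?_))
    have : (∏ t : Fin T, P.p t h m (h t) * Q.q t h m (m t)) = jointPMF P Q h m := by
      rw [jointPMF, HumanModel.cc, MachinePolicy.cc, ← Finset.prod_mul_distrib]
    rw [this]
    rfl
  | succ k ih =>
    intro hk1
    have hk : k ≤ T := by omega
    rw [ih hk]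
    set t0 : Fin T := ⟨T - 1 - k, idx_lt T k⟩ with ht0
    set A : Finset (Fin T) := Finset.univ.filter (fun t : Fin T => t.val < T - (k+1)) with hA
    have hins : Finset.univ.filter (fun t : Fin T => t.val < T - k) = insert t0 A := by
      ext t
      have := t.isLt
      simp only [hA, ht0, Finset.mem_filter, Finset.mem_univ, true_and, Finset.mem_insert,
        Fin.ext_iff]
      omega
    have hnot : t0 ∉ A := by
      simp only [hA, ht0, Finset.mem_filter, Finset.mem_univ, true_and]
      omega
    set F : (Fin T → H) → (Fin T → M) → ℝ := fun h m =>
      (P.p t0 h m (h t0) * Q.q t0 h m (m t0)) *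
        ((∏ t ∈ A, P.p t h m (h t) * Q.q t h m (m t)) * Ebar P Q G k h m) with hF
    have step1 : ∑ h : Fin T → H, ∑ m : Fin T → M,
        (∏ t ∈ Finset.univ.filter (fun t : Fin T => t.val < T - k),
          P.p t h m (h t) * Q.q t h m (m t)) * Ebar P Q G k h m
        = ∑ h : Fin T → H, ∑ m : Fin T → M, F h m := by
      refine Finset.sum_congr rfl (fun h _ => Finset.sum_congr rfl (fun m _ => ?_))
      rw [hins, Finset.prod_insert hnot, hF, mul_assoc]
    -- pointwise computation of the inner double sum after re-updating
    have point : ∀ (h : Fin T → H) (m : Fin T → M),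
        (∑ b : M, ∑ a : H, F (Function.update h t0 a) (Function.update m t0 b))
          = (∏ t ∈ A, P.p t h m (h t) * Q.q t h m (m t)) * Ebar P Q G (k+1) h m := by
      intro h m
      have hterm : ∀ (b : M) (a : H),
          F (Function.update h t0 a) (Function.update m t0 b)
            = (∏ t ∈ A, P.p t h m (h t) * Q.q t h m (m t)) *
              (Q.q t0 h m b *
                (P.p t0 h (Function.update m t0 b) a *
                  Ebar P Q G k (Function.update h t0 a) (Function.update m t0 b))) := by
        intro b a
        have hp : P.p t0 (Function.update h t0 a) (Function.update m t0 b)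
              ((Function.update h t0 a) t0)
            = P.p t0 h (Function.update m t0 b) a := by
          rw [Function.update_self]
          have := P.causal t0 (Function.update h t0 a) h
              (Function.update m t0 b) (Function.update m t0 b)
              (fun s hs => Function.update_of_ne (Fin.ne_of_lt hs) _ _)
              (fun s _ => rfl)
          rw [this]
        have hq : Q.q t0 (Function.update h t0 a) (Function.update m t0 b)
              ((Function.update m t0 b) t0)
            = Q.q t0 h m b := by
          rw [Function.update_self]
          have := Q.causal t0 (Function.update h t0 a) h (Function.update m t0 b) m
              (fun s hs => Function.update_of_ne (Fin.ne_of_lt hs) _ _)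
              (fun s hs => Function.update_of_ne (Fin.ne_of_lt hs) _ _)
          rw [this]
        have hprod : (∏ t ∈ A, P.p t (Function.update h t0 a) (Function.update m t0 b)
              ((Function.update h t0 a) t) *
              Q.q t (Function.update h t0 a) (Function.update m t0 b)
              ((Function.update m t0 b) t))
            = ∏ t ∈ A, P.p t h m (h t) * Q.q t h m (m t) := by
          refine Finset.prod_congr rfl (fun t htA => ?_)
          have htlt : t.val < T - (k+1) := by
            simpa only [hA, Finset.mem_filter, Finset.mem_univ, true_and] using htA
          have htne : ∀ s : Fin T, s ≤ t → s ≠ t0 := by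
            intro s hs
            intro hc
            have : s.val ≤ t.val := Fin.le_def.mp hs
            rw [hc] at this
            simp only [ht0] at this
            omega
          have hpc := P.causal t (Function.update h t0 a) h
              (Function.update m t0 b) m
              (fun s hs => Function.update_of_ne (htne s (le_of_lt hs)) _ _)
              (fun s hs => Function.update_of_ne (htne s hs) _ _)
          have hqc := Q.causal t (Function.update h t0 a) h
              (Function.update m t0 b) m
              (fun s hs => Function.update_of_ne (htne s (le_of_lt hs)) _ _)
              (fun s hs => Function.update_of_ne (htne s (le_of_lt hs)) _ _)
          rw [hpc, hqc, Function.update_of_ne (htne t le_rfl),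
            Function.update_of_ne (htne t le_rfl)]
        rw [hF]
        simp only []
        rw [hp, hq, hprod]
        ring
      calc (∑ b : M, ∑ a : H, F (Function.update h t0 a) (Function.update m t0 b))
          = ∑ b : M, ∑ a : H,
              (∏ t ∈ A, P.p t h m (h t) * Q.q t h m (m t)) *
                (Q.q t0 h m b *
                  (P.p t0 h (Function.update m t0 b) a *
                    Ebar P Q G k (Function.update h t0 a) (Function.update m t0 b))) := by
            exact Finset.sum_congr rfl (fun b _ => Finset.sum_congr rfl (fun a _ => hterm b a))
        _ = (∏ t ∈ A, P.p t h m (h t) * Q.q t h m (m t)) *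
              ∑ b : M, ∑ a : H,
                Q.q t0 h m b *
                  (P.p t0 h (Function.update m t0 b) a *
                    Ebar P Q G k (Function.update h t0 a) (Function.update m t0 b)) := by
            rw [Finset.mul_sum]
            exact Finset.sum_congr rfl (fun b _ => by rw [Finset.mul_sum])
        _ = (∏ t ∈ A, P.p t h m (h t) * Q.q t h m (m t)) * Ebar P Q G (k+1) h m := rfl
    have count := sum_update_pair t0 F
    have hcard : ((Fintype.card H : ℝ) * Fintype.card M) ≠ 0 := by
      have h1 : 0 < Fintype.card H := Fintype.card_pos
      have h2 : 0 < Fintype.card M := Fintype.card_pos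
      positivity
    have key : ∑ h : Fin T → H, ∑ m : Fin T → M, F h m
        = (((Fintype.card H : ℝ) * Fintype.card M)⁻¹) *
          ∑ h : Fin T → H, ∑ m : Fin T → M,
            (∏ t ∈ A, P.p t h m (h t) * Q.q t h m (m t)) * Ebar P Q G (k+1) h m := by
      rw [eq_inv_mul_iff_mul_eq₀ hcard] at *
      rw [← count]
      refine Finset.sum_congr rfl (fun h _ => Finset.sum_congr rfl (fun m _ => ?_))
      exact point h m
    rw [step1, key, pow_succ]
    ring


/-- MASTER: expectations reduce to the backward recursion, independent of the base point. -/
lemma master (P : HumanModel T H M) (Q : MachinePolicy T H M)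
    (G : (Fin T → H) → (Fin T → M) → ℝ) (h0 : Fin T → H) (m0 : Fin T → M) :
    expVal P Q G = Ebar P Q G T h0 m0 := by
  have hM := master_aux P Q G T le_rfl
  have hfil : Finset.univ.filter (fun t : Fin T => t.val < T - T) = (∅ : Finset (Fin T)) := by
    ext t; simp
  rw [hfil] at hM
  simp only [Finset.prod_empty, one_mul] at hM
  have hconst : ∀ (h : Fin T → H) (m : Fin T → M), Ebar P Q G T h m = Ebar P Q G T h0 m0 :=
    fun h m => Ebar_dep P Q G T h h0 m m0 (fun s hs => by omega) (fun s hs => by omega)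
  have hsum : ∑ h : Fin T → H, ∑ m : Fin T → M, Ebar P Q G T h m
      = ((Fintype.card H : ℝ) ^ T * (Fintype.card M : ℝ) ^ T) * Ebar P Q G T h0 m0 := by
    calc ∑ h : Fin T → H, ∑ m : Fin T → M, Ebar P Q G T h m
        = ∑ _h : Fin T → H, ∑ _m : Fin T → M, Ebar P Q G T h0 m0 :=
          Finset.sum_congr rfl (fun h _ => Finset.sum_congr rfl (fun m _ => hconst h m))
      _ = ((Fintype.card H : ℝ) ^ T * (Fintype.card M : ℝ) ^ T) * Ebar P Q G T h0 m0 := by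
          simp [Finset.sum_const, Finset.card_univ, nsmul_eq_mul, Fintype.card_fun]
          ring
  rw [expVal, hM, hsum]
  have h1 : (0:ℝ) < Fintype.card H := by exact_mod_cast Fintype.card_pos
  have h2 : (0:ℝ) < Fintype.card M := by exact_mod_cast Fintype.card_pos
  rw [← mul_assoc]
  have hone : ((Fintype.card H : ℝ) * Fintype.card M)⁻¹ ^ T *
      ((Fintype.card H : ℝ) ^ T * (Fintype.card M : ℝ) ^ T) = 1 := by
    rw [← mul_pow, ← mul_pow, inv_mul_cancel₀ (by positivity), one_pow]
  rw [hone, one_mul]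

lemma sum_jointPMF (P : HumanModel T H M) (Q : MachinePolicy T H M) :
    ∑ h : Fin T → H, ∑ m : Fin T → M, jointPMF P Q h m = 1 := by
  have h0 : Fin T → H := Classical.arbitrary _
  have m0 : Fin T → M := Classical.arbitrary _
  have hm := master P Q (fun _ _ => 1) (Classical.arbitrary _) (Classical.arbitrary _)
  have hE : Ebar P Q (fun _ _ => 1) T (Classical.arbitrary _) (Classical.arbitrary _) = 1 :=
    Ebar_indep P Q T (fun _ _ => 1) (fun _ _ _ _ _ _ => rfl) _ _
  rw [hE] at hm
  simpa [expVal] using hm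

lemma cc_nonneg (P : HumanModel T H M) (h : Fin T → H) (m : Fin T → M) :
    0 ≤ P.cc h m :=
  Finset.prod_nonneg (fun t _ => P.nonneg t h m (h t))

lemma ccQ_nonneg (Q : MachinePolicy T H M) (h : Fin T → H) (m : Fin T → M) :
    0 ≤ Q.cc h m :=
  Finset.prod_nonneg (fun t _ => Q.nonneg t h m (m t))

lemma jointPMF_nonneg (P : HumanModel T H M) (Q : MachinePolicy T H M)
    (h : Fin T → H) (m : Fin T → M) : 0 ≤ jointPMF P Q h m :=
  mul_nonneg (cc_nonneg P h m) (ccQ_nonneg Q h m)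

lemma expVal_congr (P : HumanModel T H M) (Q : MachinePolicy T H M)
    {G G' : (Fin T → H) → (Fin T → M) → ℝ} (hG : ∀ h m, G h m = G' h m) :
    expVal P Q G = expVal P Q G' := by
  refine Finset.sum_congr rfl (fun h _ => Finset.sum_congr rfl (fun m _ => ?_))
  rw [hG]

/-- Gibbs' inequality: the expected log-likelihood of any everywhere-positive model `R`
is at most that of the true model `P`. -/
lemma gibbs_ineq (P R : HumanModel T H M) (Q : MachinePolicy T H M)
    (hR : ∀ h m, 0 < R.cc h m) :
    expVal P Q (fun h m => Real.log (R.cc h m)) ≤ expVal P Q (fun h m => Real.log (P.cc h m)) := by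
  have key : ∀ (h : Fin T → H) (m : Fin T → M),
      jointPMF P Q h m * Real.log (R.cc h m)
        ≤ jointPMF P Q h m * Real.log (P.cc h m) + (jointPMF R Q h m - jointPMF P Q h m) := by
    intro h m
    rcases eq_or_lt_of_le (jointPMF_nonneg P Q h m) with hz | hpos
    · rw [← hz]
      have := jointPMF_nonneg R Q h m
      simp only [zero_mul, zero_add]
      linarith
    · have hPcc : 0 < P.cc h m := by
        rcases eq_or_lt_of_le (cc_nonneg P h m) with h1 | h1
        · exfalso; rw [jointPMF, ← h1, zero_mul] at hpos; exact lt_irrefl 0 hpos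
        · exact h1
      have hQcc : 0 < Q.cc h m := by
        rcases eq_or_lt_of_le (ccQ_nonneg Q h m) with h1 | h1
        · exfalso; rw [jointPMF, ← h1, mul_zero] at hpos; exact lt_irrefl 0 hpos
        · exact h1
      have hlog : Real.log (R.cc h m) - Real.log (P.cc h m) ≤ R.cc h m / P.cc h m - 1 := by
        rw [← Real.log_div (ne_of_gt (hR h m)) (ne_of_gt hPcc)]
        exact Real.log_le_sub_one_of_pos (div_pos (hR h m) hPcc)
      have hmul := mul_le_mul_of_nonneg_left hlog (le_of_lt hpos)
      have hsimp : jointPMF P Q h m * (R.cc h m / P.cc h m - 1)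
          = jointPMF R Q h m - jointPMF P Q h m := by
        rw [jointPMF, jointPMF]
        field_simp
      rw [mul_sub, hsimp] at hmul
      linarith
  have hsum : ∑ h : Fin T → H, ∑ m : Fin T → M, jointPMF P Q h m * Real.log (R.cc h m)
      ≤ ∑ h : Fin T → H, ∑ m : Fin T → M,
          (jointPMF P Q h m * Real.log (P.cc h m) + (jointPMF R Q h m - jointPMF P Q h m)) :=
    Finset.sum_le_sum (fun h _ => Finset.sum_le_sum (fun m _ => key h m))
  have hone : ∑ h : Fin T → H, ∑ m : Fin T → M,
      (jointPMF P Q h m * Real.log (P.cc h m) + (jointPMF R Q h m - jointPMF P Q h m))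
      = expVal P Q (fun h m => Real.log (P.cc h m)) := by
    simp only [Finset.sum_add_distrib, Finset.sum_sub_distrib]
    rw [sum_jointPMF, sum_jointPMF]
    simp [expVal]
  rw [hone] at hsum
  exact hsum

lemma humanEntropy_eq (P : HumanModel T H M) (Q : MachinePolicy T H M) :
    humanEntropy P Q = - expVal P Q (fun h m => Real.log (P.cc h m)) := by
  simp [humanEntropy, expVal, ← Finset.sum_neg_distrib, mul_neg]


lemma expVal_fsum {ι : Type*} (P : HumanModel T H M) (Q : MachinePolicy T H M)
    (s : Finset ι) (φ : ι → (Fin T → H) → (Fin T → M) → ℝ) :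
    expVal P Q (fun h m => ∑ i ∈ s, φ i h m) = ∑ i ∈ s, expVal P Q (φ i) := by
  unfold expVal
  calc ∑ h : Fin T → H, ∑ m : Fin T → M, jointPMF P Q h m * ∑ i ∈ s, φ i h m
      = ∑ h : Fin T → H, ∑ m : Fin T → M, ∑ i ∈ s, jointPMF P Q h m * φ i h m := by
        exact Finset.sum_congr rfl fun h _ => Finset.sum_congr rfl fun m _ => by
          rw [Finset.mul_sum]
    _ = ∑ h : Fin T → H, ∑ i ∈ s, ∑ m : Fin T → M, jointPMF P Q h m * φ i h m :=
        Finset.sum_congr rfl fun h _ => Finset.sum_comm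
    _ = ∑ i ∈ s, ∑ h : Fin T → H, ∑ m : Fin T → M, jointPMF P Q h m * φ i h m :=
        Finset.sum_comm

lemma expVal_sub (P : HumanModel T H M) (Q : MachinePolicy T H M)
    (G G' : (Fin T → H) → (Fin T → M) → ℝ) :
    expVal P Q (fun h m => G h m - G' h m) = expVal P Q G - expVal P Q G' := by
  simp [expVal, mul_sub, Finset.sum_sub_distrib]

lemma expVal_const_mul (P : HumanModel T H M) (Q : MachinePolicy T H M)
    (c : ℝ) (G : (Fin T → H) → (Fin T → M) → ℝ) :
    expVal P Q (fun h m => c * G h m) = c * expVal P Q G := by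
  simp only [expVal, Finset.mul_sum]
  refine Finset.sum_congr rfl (fun h _ => Finset.sum_congr rfl (fun m _ => ?_))
  ring

/-- Computation of one step of `Ebar` when `G` doesn't look at coordinates being summed,
except for the machine coordinate at the current step. -/
lemma Ebar_succ_cond (P : HumanModel T H M) (Q : MachinePolicy T H M)
    (G : (Fin T → H) → (Fin T → M) → ℝ) (k : ℕ)
    (hGh : ∀ (h h' : Fin T → H) (m : Fin T → M),
      (∀ s : Fin T, s.val < T - 1 - k → h s = h' s) → G h m = G h' m)
    (hGm : ∀ (h : Fin T → H) (m m' : Fin T → M),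
      (∀ s : Fin T, s.val < T - k → m s = m' s) → G h m = G h m')
    (h : Fin T → H) (m : Fin T → M) :
    Ebar P Q G (k+1) h m
      = ∑ b : M, Q.q ⟨T - 1 - k, idx_lt T k⟩ h m b *
          G h (Function.update m ⟨T - 1 - k, idx_lt T k⟩ b) := by
  have hdep : ∀ (h h' : Fin T → H) (m m' : Fin T → M),
      (∀ s : Fin T, s.val < T - k → h s = h' s) →
      (∀ s : Fin T, s.val < T - k → m s = m' s) → G h m = G h' m' := by
    intro h1 h2 m1 m2 hh hm
    rw [hGh h1 h2 m1 (fun s hs => hh s (by omega)), hGm h2 m1 m2 hm]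
  show (∑ b : M, ∑ a : H, _) = _
  refine Finset.sum_congr rfl (fun b _ => ?_)
  have inner : ∀ a : H,
      Ebar P Q G k (Function.update h ⟨T - 1 - k, idx_lt T k⟩ a)
        (Function.update m ⟨T - 1 - k, idx_lt T k⟩ b)
      = G h (Function.update m ⟨T - 1 - k, idx_lt T k⟩ b) := by
    intro a
    rw [Ebar_indep P Q k G hdep]
    refine hGh _ _ _ (fun s hs => ?_)
    have hsne : s ≠ (⟨T - 1 - k, idx_lt T k⟩ : Fin T) := by
      intro hc
      rw [hc] at hs
      simp at hs
    exact Function.update_of_ne hsne _ _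
  calc (∑ a : H, Q.q ⟨T - 1 - k, idx_lt T k⟩ h m b *
        (P.p ⟨T - 1 - k, idx_lt T k⟩ h (Function.update m ⟨T - 1 - k, idx_lt T k⟩ b) a *
          Ebar P Q G k (Function.update h ⟨T - 1 - k, idx_lt T k⟩ a)
            (Function.update m ⟨T - 1 - k, idx_lt T k⟩ b)))
      = ∑ a : H, Q.q ⟨T - 1 - k, idx_lt T k⟩ h m b *
          (P.p ⟨T - 1 - k, idx_lt T k⟩ h (Function.update m ⟨T - 1 - k, idx_lt T k⟩ b) a *
            G h (Function.update m ⟨T - 1 - k, idx_lt T k⟩ b)) := by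
        refine Finset.sum_congr rfl (fun a _ => ?_)
        rw [inner a]
    _ = Q.q ⟨T - 1 - k, idx_lt T k⟩ h m b * G h (Function.update m ⟨T - 1 - k, idx_lt T k⟩ b) := by
        rw [← Finset.mul_sum]
        congr 1
        rw [← Finset.sum_mul, P.sum_one, one_mul]

/-- Tower property: expected `log Zcond` at step `t` equals expected `log Zmarg` at `t+1`. -/
lemma tower_step (P : HumanModel T H M) (Q : MachinePolicy T H M)
    (φ : (Fin T → H) → (Fin T → M) → ℝ) (t : Fin T) (ht : t.val + 1 < T) :
    expVal P Q (fun h m => Real.log (Zcond Q φ t h m))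
      = expVal P Q (fun h m => Real.log (Zmarg Q φ ⟨t.val + 1, ht⟩ h m)) := by
  have hT := t.isLt
  set t' : Fin T := ⟨t.val + 1, ht⟩ with ht'
  set k0 : ℕ := T - 1 - (t.val + 1) with hk0
  have hidx : (⟨T - 1 - k0, idx_lt T k0⟩ : Fin T) = t' := by
    refine Fin.ext ?_
    show T - 1 - k0 = t.val + 1
    omega
  set G1 : (Fin T → H) → (Fin T → M) → ℝ := fun h m => Real.log (Zcond Q φ t h m) with hG1
  set G2 : (Fin T → H) → (Fin T → M) → ℝ := fun h m => Real.log (Zmarg Q φ t' h m) with hG2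
  -- step computations
  have hL : ∀ h m, Ebar P Q G1 (k0+1) h m = Real.log (Zcond Q φ t h m) := by
    intro h m
    rw [Ebar_succ_cond P Q G1 k0
      (fun h1 h2 m1 hh => by
        simp only [hG1]
        exact congrArg Real.log (Zcond_dep Q φ t h1 h2 m1 m1
          (fun s hs => hh s (by simp only [hk0] at *; omega)) (fun s _ => rfl)))
      (fun h1 m1 m2 hm => by
        simp only [hG1]
        exact congrArg Real.log (Zcond_dep Q φ t h1 h1 m1 m2
          (fun s _ => rfl) (fun s hs => hm s (by simp only [hk0] at *; omega))))]
    have : ∀ b : M, G1 h (Function.update m ⟨T - 1 - k0, idx_lt T k0⟩ b)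
        = Real.log (Zcond Q φ t h m) := by
      intro b
      simp only [hG1]
      refine congrArg Real.log (Zcond_dep Q φ t h h _ m (fun s _ => rfl) (fun s hs => ?_))
      refine Function.update_of_ne (fun hc => ?_) _ _
      rw [hidx] at hc
      rw [hc] at hs
      simp only [ht'] at hs
      omega
    calc (∑ b : M, Q.q ⟨T - 1 - k0, idx_lt T k0⟩ h m b *
          G1 h (Function.update m ⟨T - 1 - k0, idx_lt T k0⟩ b))
        = ∑ b : M, Q.q ⟨T - 1 - k0, idx_lt T k0⟩ h m b * Real.log (Zcond Q φ t h m) := by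
          exact Finset.sum_congr rfl (fun b _ => by rw [this b])
      _ = Real.log (Zcond Q φ t h m) := by
          rw [← Finset.sum_mul, Q.sum_one, one_mul]
  have hR : ∀ h m, Ebar P Q G2 (k0+1) h m
      = ∑ b : M, Q.q t' h m b * Real.log (Zmarg Q φ t' h (Function.update m t' b)) := by
    intro h m
    rw [Ebar_succ_cond P Q G2 k0
      (fun h1 h2 m1 hh => by
        simp only [hG2]
        refine congrArg Real.log (Zmarg_dep Q φ t' h1 h2 m1 m1
          (fun s hs => hh s ?_) (fun s _ => rfl))
        have hv : t'.val = t.val + 1 := rfl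
        simp only [hk0] at *
        omega)
      (fun h1 m1 m2 hm => by
        simp only [hG2]
        refine congrArg Real.log (Zmarg_dep Q φ t' h1 h1 m1 m2
          (fun s _ => rfl) (fun s hs => hm s ?_))
        have hv : t'.val = t.val + 1 := rfl
        simp only [hk0] at *
        omega)]
    rw [hidx]
  -- key pointwise identity: log Zcond t = conditional average of log Zmarg t'
  have hkey : ∀ h m, Real.log (Zcond Q φ t h m)
      = ∑ b : M, Q.q t' h m b * Real.log (Zmarg Q φ t' h (Function.update m t' b)) := by
    intro h m
    have hfuel : T - 1 - t.val = k0 + 1 := by omega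
    show Real.log (Zaux Q φ (T - 1 - t.val) h m) = _
    rw [hfuel]
    rw [show Zaux Q φ (k0+1) h m = Real.exp (∑ b : M,
      Q.q ⟨T - 1 - k0, idx_lt T k0⟩ h m b *
        Real.log (∑ a : H, Zaux Q φ k0
          (Function.update h ⟨T - 1 - k0, idx_lt T k0⟩ a)
          (Function.update m ⟨T - 1 - k0, idx_lt T k0⟩ b))) from rfl]
    rw [Real.log_exp]
    simp only [hidx]
    rfl
  have hEq : ∀ h m, Ebar P Q G1 (k0+1) h m = Ebar P Q G2 (k0+1) h m := by
    intro h m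
    rw [hL, hR, hkey]
  have hfin : k0 + 1 ≤ T := by omega
  have h0 : Fin T → H := Classical.arbitrary _
  rw [master P Q G1 (Classical.arbitrary _) (Classical.arbitrary _),
    master P Q G2 (Classical.arbitrary _) (Classical.arbitrary _)]
  exact Ebar_eq_of_eq P Q G1 G2 (k0+1) hEq T hfin _ _

/-- At the last step, `Zcond` is just `exp φ`. -/
lemma Zcond_last (Q : MachinePolicy T H M) (φ : (Fin T → H) → (Fin T → M) → ℝ)
    (t : Fin T) (ht : t.val = T - 1) (h : Fin T → H) (m : Fin T → M) :
    Zcond Q φ t h m = Real.exp (φ h m) := by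
  have : T - 1 - t.val = 0 := by omega
  show Zaux Q φ (T - 1 - t.val) h m = _
  rw [this]
  rfl

/-- Expected `log Zmarg` at step 0 is the dual partition constant. -/
lemma tower_base (P : HumanModel T H M) (Q : MachinePolicy T H M)
    (φ : (Fin T → H) → (Fin T → M) → ℝ) :
    expVal P Q (fun h m => Real.log (Zmarg Q φ 0 h m)) = dualPartition Q φ := by
  have hT : 0 < T := Nat.pos_of_ne_zero (NeZero.ne T)
  set G : (Fin T → H) → (Fin T → M) → ℝ := fun h m => Real.log (Zmarg Q φ 0 h m) with hG
  set h0 : Fin T → H := Classical.arbitrary _ with hh0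
  set m0 : Fin T → M := Classical.arbitrary _ with hm0
  rw [master P Q G h0 m0]
  have hfuel : T = (T - 1) + 1 := by omega
  have hzero : (⟨T - 1 - (T - 1), idx_lt T (T - 1)⟩ : Fin T) = 0 := by
    refine Fin.ext ?_
    show T - 1 - (T - 1) = (0 : Fin T).val
    simp
  have hGh' : ∀ (h1 h2 : Fin T → H) (m1 : Fin T → M), G h1 m1 = G h2 m1 := by
    intro h1 h2 m1
    simp only [hG]
    exact congrArg Real.log (Zmarg_dep Q φ 0 h1 h2 m1 m1
      (fun s hs => by simp at hs) (fun s _ => rfl))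
  have hGm' : ∀ (h1 : Fin T → H) (m1 m2 : Fin T → M),
      (∀ s : Fin T, s.val < T - (T-1) → m1 s = m2 s) → G h1 m1 = G h1 m2 := by
    intro h1 m1 m2 hm
    simp only [hG]
    refine congrArg Real.log (Zmarg_dep Q φ 0 h1 h1 m1 m2 (fun s _ => rfl) (fun s hs => ?_))
    have hv : s.val = 0 := by simpa using Fin.le_def.mp hs
    exact hm s (by omega)
  have step : Ebar P Q G T h0 m0
      = ∑ b : M, Q.q 0 h0 m0 b * G h0 (Function.update m0 0 b) := by
    rw [congrArg (fun n => Ebar P Q G n h0 m0) hfuel]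
    rw [Ebar_succ_cond P Q G (T-1)
      (fun h1 h2 m1 _ => hGh' h1 h2 m1)
      (fun h1 m1 m2 hm => hGm' h1 m1 m2 hm)]
    rw [hzero]
  rw [step]
  refine Finset.sum_congr rfl (fun b _ => ?_)
  rfl


/-- Key identity: for ANY human model `P`, the expected causal log-likelihood of the
causal Gibbs model decomposes as `E_P[φ] - dualPartition`. -/
lemma loglik_identity (P : HumanModel T H M) (Q : MachinePolicy T H M)
    (φ : (Fin T → H) → (Fin T → M) → ℝ) :
    expVal P Q (fun h m => Real.log (gibbsCC Q φ h m))
      = expVal P Q φ - dualPartition Q φ := by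
  have hT : 0 < T := Nat.pos_of_ne_zero (NeZero.ne T)
  have hpt : ∀ (h : Fin T → H) (m : Fin T → M), Real.log (gibbsCC Q φ h m)
      = ∑ t : Fin T, (Real.log (Zcond Q φ t h m) - Real.log (Zmarg Q φ t h m)) := by
    intro h m
    rw [gibbsCC, Real.log_prod
      (fun t _ => ne_of_gt (div_pos (Zcond_pos Q φ t h m) (Zmarg_pos Q φ t h m)))]
    exact Finset.sum_congr rfl fun t _ =>
      Real.log_div (ne_of_gt (Zcond_pos Q φ t h m)) (ne_of_gt (Zmarg_pos Q φ t h m))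
  rw [expVal_congr P Q hpt, expVal_fsum]
  set seq : ℕ → ℝ := fun n =>
    if hn : n < T then expVal P Q (fun h m => Real.log (Zmarg Q φ ⟨n, hn⟩ h m))
    else expVal P Q φ with hseq
  have hc : ∀ t : Fin T,
      expVal P Q (fun h m => Real.log (Zcond Q φ t h m)) = seq (t.val + 1) := by
    intro t
    by_cases hlt : t.val + 1 < T
    · rw [tower_step P Q φ t hlt]
      simp only [hseq]
      rw [dif_pos hlt]
    · have hlast : t.val = T - 1 := by have := t.isLt; omega
      have hpt2 : ∀ (h : Fin T → H) (m : Fin T → M),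
          Real.log (Zcond Q φ t h m) = φ h m := fun h m => by
        rw [Zcond_last Q φ t hlast, Real.log_exp]
      rw [expVal_congr P Q hpt2]
      simp only [hseq]
      rw [dif_neg hlt]
  have hmm : ∀ t : Fin T,
      expVal P Q (fun h m => Real.log (Zmarg Q φ t h m)) = seq t.val := by
    intro t
    simp only [hseq]
    rw [dif_pos t.isLt]
  have htel : ∑ t : Fin T,
      expVal P Q (fun h m =>
        Real.log (Zcond Q φ t h m) - Real.log (Zmarg Q φ t h m))
      = seq T - seq 0 := by
    calc ∑ t : Fin T, expVal P Q (fun h m =>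
          Real.log (Zcond Q φ t h m) - Real.log (Zmarg Q φ t h m))
        = ∑ t : Fin T, (seq (t.val + 1) - seq t.val) := by
          refine Finset.sum_congr rfl (fun t _ => ?_)
          rw [expVal_sub, hc t, hmm t]
      _ = ∑ n ∈ Finset.range T, (seq (n + 1) - seq n) :=
          Fin.sum_univ_eq_sum_range (fun n => seq (n+1) - seq n) T
      _ = seq T - seq 0 := Finset.sum_range_sub seq T
  rw [htel]
  have hseqT : seq T = expVal P Q φ := by
    simp only [hseq]
    rw [dif_neg (lt_irrefl T)]
  have hseq0 : seq 0 = dualPartition Q φ := by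
    simp only [hseq]
    rw [dif_pos hT]
    rw [← tower_base P Q φ]
    refine expVal_congr P Q (fun h m => ?_)
    congr 1
  rw [hseqT, hseq0]

/-- The causal Gibbs human model as a bona fide `HumanModel`. -/
noncomputable def gibbsModel (Q : MachinePolicy T H M)
    (φ : (Fin T → H) → (Fin T → M) → ℝ) : HumanModel T H M where
  p t h m a := Zcond Q φ t (Function.update h t a) m / Zmarg Q φ t h m
  causal := by
    intro t h h' m m' hh hm
    funext a
    have h1 : Zcond Q φ t (Function.update h t a) m
        = Zcond Q φ t (Function.update h' t a) m' := by
      refine Zcond_dep Q φ t _ _ _ _ (fun s hs => ?_) (fun s hs => hm s (Fin.le_def.mpr hs))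
      rcases eq_or_ne s t with rfl | hst
      · simp
      · rw [Function.update_of_ne hst, Function.update_of_ne hst]
        refine hh s (Fin.lt_def.mpr ?_)
        exact lt_of_le_of_ne hs (fun hc => hst (Fin.ext hc))
    have h2 : Zmarg Q φ t h m = Zmarg Q φ t h' m' :=
      Zmarg_dep Q φ t h h' m m' (fun s hs => hh s (Fin.lt_def.mpr hs))
        (fun s hs => hm s (Fin.le_def.mpr hs))
    rw [h1, h2]
  nonneg t h m a := div_nonneg (le_of_lt (Zcond_pos Q φ t _ m)) (le_of_lt (Zmarg_pos Q φ t h m))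
  sum_one := by
    intro t h m
    rw [← Finset.sum_div]
    exact div_self (ne_of_gt (Zmarg_pos Q φ t h m))

lemma gibbsModel_cc (Q : MachinePolicy T H M) (φ : (Fin T → H) → (Fin T → M) → ℝ)
    (h : Fin T → H) (m : Fin T → M) :
    (gibbsModel Q φ).cc h m = gibbsCC Q φ h m := by
  refine Finset.prod_congr rfl (fun t _ => ?_)
  show Zcond Q φ t (Function.update h t (h t)) m / Zmarg Q φ t h m = _
  rw [Function.update_eq_self]

lemma cc_of_isGibbs {Q : MachinePolicy T H M} {φ : (Fin T → H) → (Fin T → M) → ℝ}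
    {P : HumanModel T H M} (hP : IsGibbs Q φ P) (h : Fin T → H) (m : Fin T → M) :
    P.cc h m = gibbsCC Q φ h m := by
  refine Finset.prod_congr rfl (fun t _ => ?_)
  rw [hP t h m (h t), Function.update_eq_self]

lemma expVal_congr_cc (P P' : HumanModel T H M) (Q : MachinePolicy T H M)
    (hcc : ∀ h m, P.cc h m = P'.cc h m) (G : (Fin T → H) → (Fin T → M) → ℝ) :
    expVal P Q G = expVal P' Q G := by
  refine Finset.sum_congr rfl (fun h _ => Finset.sum_congr rfl (fun m _ => ?_))
  rw [jointPMF, jointPMF, hcc]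

lemma continuous_Zaux {F : Type*} [Fintype F] (Q : MachinePolicy T H M)
    (f : F → (Fin T → H) → (Fin T → M) → ℝ) :
    ∀ (k : ℕ) (h : Fin T → H) (m : Fin T → M),
      Continuous (fun lam : F → ℝ =>
        Zaux Q (fun h' m' => ∑ i, lam i * f i h' m') k h m) := by
  intro k
  induction k with
  | zero =>
    intro h m
    show Continuous fun lam : F → ℝ => Real.exp (∑ i, lam i * f i h m)
    exact Real.continuous_exp.comp
      (continuous_finset_sum _ fun i _ => (continuous_apply i).mul continuous_const)
  | succ k ih =>
    intro h m
    show Continuous fun lam : F → ℝ => Real.exp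
      (∑ b : M, Q.q ⟨T - 1 - k, idx_lt T k⟩ h m b *
        Real.log (∑ a : H, Zaux Q (fun h' m' => ∑ i, lam i * f i h' m') k
          (Function.update h ⟨T - 1 - k, idx_lt T k⟩ a)
          (Function.update m ⟨T - 1 - k, idx_lt T k⟩ b)))
    refine Real.continuous_exp.comp (continuous_finset_sum _ fun b _ => ?_)
    refine continuous_const.mul ?_
    refine Continuous.log (continuous_finset_sum _ fun a _ => ih _ _) (fun lam => ?_)
    exact ne_of_gt (Finset.sum_pos (fun a _ => Zaux_pos Q _ k _ _) Finset.univ_nonempty)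

lemma continuous_expVal_gibbs {F : Type*} [Fintype F] (Q : MachinePolicy T H M)
    (f : F → (Fin T → H) → (Fin T → M) → ℝ) (G : (Fin T → H) → (Fin T → M) → ℝ) :
    Continuous (fun lam : F → ℝ =>
      expVal (gibbsModel Q (fun h m => ∑ i, lam i * f i h m)) Q G) := by
  have hrw : ∀ lam : F → ℝ,
      expVal (gibbsModel Q (fun h m => ∑ i, lam i * f i h m)) Q G
        = ∑ h : Fin T → H, ∑ m : Fin T → M,
            gibbsCC Q (fun h' m' => ∑ i, lam i * f i h' m') h m * (Q.cc h m * G h m) := by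
    intro lam
    refine Finset.sum_congr rfl (fun h _ => Finset.sum_congr rfl (fun m _ => ?_))
    rw [jointPMF, gibbsModel_cc, mul_assoc]
  simp only [hrw]
  refine continuous_finset_sum _ fun h _ => continuous_finset_sum _ fun m _ => ?_
  refine Continuous.mul ?_ continuous_const
  refine continuous_finset_prod _ fun t _ => ?_
  refine Continuous.div (continuous_Zaux Q f _ h m)
    (continuous_finset_sum _ fun a _ => continuous_Zaux Q f _ _ m) ?_
  intro lam
  exact ne_of_gt (Zmarg_pos Q _ t h m)

end AuxLemmas

/-- maximum causal entropy = maximum causal log-likelihood, Theorem 2: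
with `𝓖 = ∅` and `c_f := E_{P*Q}[f]` computed from the true behavior `P*`, if `λ̂`
maximizes the expected causal log-likelihood `λ ↦ E_{P*Q}[log P_λ(H^T‖M^T)]`, then the
causal Gibbs model `P_{λ̂}` matches the feature moments and maximizes the causally
conditioned entropy over all human models matching them. -/
theorem maxlikelihood_is_maxent [Nonempty H] [Nonempty M]
    {F : Type*} [Fintype F]
    (Pstar : HumanModel T H M) (Q : MachinePolicy T H M)
    (f : F → (Fin T → H) → (Fin T → M) → ℝ)
    (lamHat : F → ℝ)
    (hmax : ∀ lam : F → ℝ,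
      expVal Pstar Q (fun h m => Real.log (gibbsCC Q (fun h' m' => ∑ i, lam i * f i h' m') h m)) ≤
      expVal Pstar Q (fun h m =>
        Real.log (gibbsCC Q (fun h' m' => ∑ i, lamHat i * f i h' m') h m)))
    (Plam : HumanModel T H M)
    (hGibbs : IsGibbs Q (fun h m => ∑ i, lamHat i * f i h m) Plam) :
    (∀ i, expVal Plam Q (f i) = expVal Pstar Q (f i)) ∧
      ∀ P : HumanModel T H M,
        (∀ i, expVal P Q (f i) = expVal Pstar Q (f i)) →
        humanEntropy P Q ≤ humanEntropy Plam Q := by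
  classical
  -- Identity (A): expected log-likelihood of the Gibbs model under ANY human model
  have keyA : ∀ (P : HumanModel T H M) (lam : F → ℝ),
      expVal P Q (fun h m => Real.log (gibbsCC Q (fun h' m' => ∑ i, lam i * f i h' m') h m))
        = (∑ i, lam i * expVal P Q (f i))
          - dualPartition Q (fun h' m' => ∑ i, lam i * f i h' m') := by
    intro P lam
    rw [loglik_identity]
    congr 1
    rw [expVal_fsum P Q Finset.univ (fun i h m => lam i * f i h m)]
    exact Finset.sum_congr rfl fun i _ => expVal_const_mul P Q (lam i) (f i)
  have hPlamcc : ∀ h m,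
      Plam.cc h m = gibbsCC Q (fun h' m' => ∑ i, lamHat i * f i h' m') h m :=
    fun h m => cc_of_isGibbs hGibbs h m
  have hPlampos : ∀ h m, 0 < Plam.cc h m := fun h m => by
    rw [hPlamcc]; exact gibbsCC_pos Q _ h m
  -- the (★) inequality combining max-likelihood optimality and Gibbs' inequality
  have star : ∀ lam : F → ℝ,
      (∑ j, lam j * expVal Pstar Q (f j)) - (∑ j, lamHat j * expVal Pstar Q (f j))
        ≤ (∑ j, lam j * expVal (gibbsModel Q (fun h m => ∑ i, lam i * f i h m)) Q (f j))
          - (∑ j, lamHat j * expVal (gibbsModel Q (fun h m => ∑ i, lam i * f i h m)) Q (f j)) := by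
    intro lam
    set Pg : HumanModel T H M := gibbsModel Q (fun h m => ∑ i, lam i * f i h m) with hPg
    have hI := hmax lam
    rw [keyA Pstar lam, keyA Pstar lamHat] at hI
    have hPgcc : ∀ h m, Pg.cc h m = gibbsCC Q (fun h' m' => ∑ i, lam i * f i h' m') h m :=
      fun h m => gibbsModel_cc Q _ h m
    have hII := gibbs_ineq Pg Plam Q hPlampos
    have e1 : expVal Pg Q (fun h m => Real.log (Plam.cc h m))
        = expVal Pg Q (fun h m =>
            Real.log (gibbsCC Q (fun h' m' => ∑ i, lamHat i * f i h' m') h m)) :=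
      expVal_congr Pg Q (fun h m => by rw [hPlamcc])
    have e2 : expVal Pg Q (fun h m => Real.log (Pg.cc h m))
        = expVal Pg Q (fun h m =>
            Real.log (gibbsCC Q (fun h' m' => ∑ i, lam i * f i h' m') h m)) :=
      expVal_congr Pg Q (fun h m => by rw [hPgcc])
    rw [e1, e2, keyA Pg lamHat, keyA Pg lam] at hII
    linarith
  -- moment matching
  have hmom : ∀ i, expVal Plam Q (f i) = expVal Pstar Q (f i) := by
    intro i
    set lamS : ℝ → (F → ℝ) := fun s j => lamHat j + s * (if j = i then 1 else 0) with hlamS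
    set g : ℝ → ℝ := fun s =>
      expVal (gibbsModel Q (fun h m => ∑ j, lamS s j * f j h m)) Q (f i) with hgdef
    have hgcont : Continuous g := by
      have hc1 : Continuous (fun s : ℝ => lamS s) := by
        refine continuous_pi (fun j => ?_)
        exact continuous_const.add (continuous_id.mul continuous_const)
      exact (continuous_expVal_gibbs Q f (f i)).comp hc1
    have hslin : ∀ (s : ℝ) (x : F → ℝ),
        ∑ j, lamS s j * x j = (∑ j, lamHat j * x j) + s * x i := by
      intro s x
      simp only [hlamS, add_mul, Finset.sum_add_distrib]
      congr 1
      have : ∀ j : F, s * (if j = i then (1:ℝ) else 0) * x j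
          = s * (if j = i then x j else 0) := by
        intro j
        by_cases hj : j = i <;> simp [hj]
      simp only [this, ← Finset.mul_sum]
      rw [Finset.sum_ite_eq' Finset.univ i x]
      simp
    have hcoord : ∀ s : ℝ, s * expVal Pstar Q (f i) ≤ s * g s := by
      intro s
      have hst := star (lamS s)
      rw [hslin s (fun j => expVal Pstar Q (f j))] at hst
      rw [hslin s (fun j =>
        expVal (gibbsModel Q (fun h m => ∑ j', lamS s j' * f j' h m)) Q (f j))] at hst
      simp only [hgdef]
      linarith
    have hg0 : g 0 = expVal Plam Q (f i) := by
      have hlam0 : lamS 0 = lamHat := by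
        funext j; simp [hlamS]
      simp only [hgdef, hlam0]
      refine expVal_congr_cc _ _ Q (fun h m => ?_) (f i)
      rw [gibbsModel_cc, hPlamcc]
    have h1 : expVal Pstar Q (f i) ≤ g 0 := by
      have tend : Filter.Tendsto g (nhdsWithin 0 (Set.Ioi 0)) (nhds (g 0)) :=
        (hgcont.tendsto 0).mono_left nhdsWithin_le_nhds
      refine ge_of_tendsto tend ?_
      refine Filter.eventually_of_mem self_mem_nhdsWithin (fun s hs => ?_)
      have hspos : (0:ℝ) < s := hs
      exact le_of_mul_le_mul_left (hcoord s) hspos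
    have h2 : g 0 ≤ expVal Pstar Q (f i) := by
      have tend : Filter.Tendsto g (nhdsWithin 0 (Set.Iio 0)) (nhds (g 0)) :=
        (hgcont.tendsto 0).mono_left nhdsWithin_le_nhds
      refine le_of_tendsto tend ?_
      refine Filter.eventually_of_mem self_mem_nhdsWithin (fun s hs => ?_)
      have hsneg : s < (0:ℝ) := hs
      have := hcoord s
      nlinarith
    rw [← hg0]
    exact le_antisymm (by linarith) (by linarith)
  refine ⟨hmom, ?_⟩
  intro P hP
  have hgibbsP := gibbs_ineq P Plam Q hPlampos
  have e3 : expVal P Q (fun h m => Real.log (Plam.cc h m))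
      = expVal P Q (fun h m =>
          Real.log (gibbsCC Q (fun h' m' => ∑ i, lamHat i * f i h' m') h m)) :=
    expVal_congr P Q (fun h m => by rw [hPlamcc])
  have e4 : expVal Plam Q (fun h m => Real.log (Plam.cc h m))
      = expVal Plam Q (fun h m =>
          Real.log (gibbsCC Q (fun h' m' => ∑ i, lamHat i * f i h' m') h m)) :=
    expVal_congr Plam Q (fun h m => by rw [hPlamcc])
  have hAP := keyA P lamHat
  have hAPlam := keyA Plam lamHat
  have hsum_eq : (∑ i, lamHat i * expVal P Q (f i)) = ∑ i, lamHat i * expVal Plam Q (f i) :=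
    Finset.sum_congr rfl (fun i _ => by rw [hP i, hmom i])
  rw [humanEntropy_eq, humanEntropy_eq]
  rw [e3, hAP] at hgibbsP
  -- expVal P Q (log P.cc) ≥ Σ lamHat c - Λ = Σ lamHat μ - Λ = expVal Plam (log Plam.cc)
  have : expVal Plam Q (fun h m => Real.log (Plam.cc h m))
      = (∑ i, lamHat i * expVal Plam Q (f i))
        - dualPartition Q (fun h' m' => ∑ i, lamHat i * f i h' m') := by
    rw [e4, hAPlam]
  linarith
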